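/- arXiv:2203.01889 — 5 statements merged into one kernel-verified Lean document; each statement's English description precedes it below -/
import Mathlib

section
/- Let x and y be nonzero vectors in a real inner product space with ⟨x, y⟩ > 0 (i.e., the angle θ between x and y satisfies θ < π/2), and suppose ‖x − y‖ ≤ ε. Then the normalized vectors satisfy ‖x/‖x‖ − y/‖y‖‖ ≤ √2 · ε / ‖x‖. -/
open scoped RealInnerProductSpace

/-- If `x, y` are nonzero vectors in a real inner product space with `⟪x, y⟫ > 0`
(angle less than `π/2`) and `‖x - y‖ ≤ ε`, then the normalized vectors satisfy
`‖x/‖x‖ - y/‖y‖‖ ≤ √2 ε / ‖x‖`. -/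
theorem normalized_dist_le_of_dist_le
    {E : Type*} [NormedAddCommGroup E] [InnerProductSpace ℝ E]
    (x y : E) (hx : x ≠ 0) (hy : y ≠ 0) (hxy : 0 < ⟪x, y⟫)
    (ε : ℝ) (h : ‖x - y‖ ≤ ε) :
    ‖‖x‖⁻¹ • x - ‖y‖⁻¹ • y‖ ≤ Real.sqrt 2 * ε / ‖x‖ := by
  set a := ‖x‖ with ha
  set b := ‖y‖ with hb
  have ha0 : 0 < a := norm_pos_iff.mpr hx
  have hb0 : 0 < b := norm_pos_iff.mpr hy
  set p := ⟪x, y⟫ with hp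
  have hcs : p ≤ a * b := real_inner_le_norm x y
  have hε0 : 0 ≤ ε := le_trans (norm_nonneg _) h
  have hdist : ‖x - y‖ ^ 2 = a ^ 2 - 2 * p + b ^ 2 := by
    rw [@norm_sub_sq_real]
  have hε2 : a ^ 2 - 2 * p + b ^ 2 ≤ ε ^ 2 := by
    rw [← hdist]; exact pow_le_pow_left₀ (norm_nonneg _) h 2
  have huv : ‖‖x‖⁻¹ • x - ‖y‖⁻¹ • y‖ ^ 2 = 2 - 2 * (p / (a * b)) := by
    rw [@norm_sub_sq_real]
    rw [norm_smul, norm_smul, real_inner_smul_left, real_inner_smul_right]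
    simp only [norm_inv, norm_norm, ← ha, ← hb, ← hp]
    rw [Real.norm_of_nonneg ha0.le, Real.norm_of_nonneg hb0.le]
    field_simp
    ring
  have key : ‖‖x‖⁻¹ • x - ‖y‖⁻¹ • y‖ ^ 2 ≤ (Real.sqrt 2 * ε / a) ^ 2 := by
    rw [huv, div_pow, mul_pow, Real.sq_sqrt (by norm_num : (2:ℝ) ≥ 0)]
    rw [le_div_iff₀ (by positivity)]
    set q := p / (a * b) with hqdef
    have hq : q * (a * b) = p := div_mul_cancel₀ p (by positivity)
    have hq1 : q ≤ 1 := by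
      rw [hqdef, div_le_one (by positivity)]; exact hcs
    have hq0 : 0 < q := by positivity
    nlinarith [sq_nonneg (a - b), mul_nonneg (le_of_lt hq0) (sq_nonneg (a-b)),
      mul_nonneg (sub_nonneg.mpr hq1) (sq_nonneg b)]
  have hnn : 0 ≤ Real.sqrt 2 * ε / a := by positivity
  nlinarith [norm_nonneg (‖x‖⁻¹ • x - ‖y‖⁻¹ • y), key, hnn]
end

section
/- Let x and y be nonzero vectors in ℝ^n all of whose coordinates are nonnegative. Then the normalized vectors satisfy ‖x/‖x‖₂ − y/‖y‖₂‖₂ ≤ √2 · ‖x − y‖₂ / ‖x‖₂. -/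
/-- If `x, y` are nonzero vectors in `ℝ^n` with nonnegative coordinates, then
`‖x/‖x‖₂ - y/‖y‖₂‖₂ ≤ √2 ‖x - y‖₂ / ‖x‖₂`. -/
theorem normalized_dist_le_of_nonneg_coords
    (n : ℕ) (x y : EuclideanSpace ℝ (Fin n))
    (hx : x ≠ 0) (hy : y ≠ 0)
    (hx0 : ∀ i, 0 ≤ x i) (hy0 : ∀ i, 0 ≤ y i) :
    ‖‖x‖⁻¹ • x - ‖y‖⁻¹ • y‖ ≤ Real.sqrt 2 * ‖x - y‖ / ‖x‖ := by
  set a := ‖x‖ with ha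
  set b := ‖y‖ with hb
  have ha0 : 0 < a := norm_pos_iff.mpr hx
  have hb0 : 0 < b := norm_pos_iff.mpr hy
  set t : ℝ := inner ℝ x y with ht
  have ht0 : 0 ≤ t := by
    rw [ht, PiLp.inner_apply]
    exact Finset.sum_nonneg fun i _ => mul_nonneg (hy0 i) (by simpa using hx0 i)
  have htab : t ≤ a * b := real_inner_le_norm x y
  have hsq : ‖‖x‖⁻¹ • x - ‖y‖⁻¹ • y‖ ^ 2 ≤ (Real.sqrt 2 * ‖x - y‖ / a) ^ 2 := by
    have h1 : ‖‖x‖⁻¹ • x - ‖y‖⁻¹ • y‖ ^ 2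
        = 2 - 2 * (a⁻¹ * (b⁻¹ * t)) := by
      rw [norm_sub_sq_real, real_inner_smul_left, real_inner_smul_right,
        norm_smul, norm_smul]
      simp only [norm_inv, norm_norm, ← ha, ← hb, ← ht, Real.norm_of_nonneg ha0.le, Real.norm_of_nonneg hb0.le]
      rw [mul_pow, mul_pow, inv_pow, inv_pow]
      field_simp
      ring
    have h2 : ‖x - y‖ ^ 2 = a ^ 2 - 2 * t + b ^ 2 := by
      rw [norm_sub_sq_real, ← ha, ← hb, ← ht]
    have h3 : (Real.sqrt 2 * ‖x - y‖ / a) ^ 2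
        = 2 * (a ^ 2 - 2 * t + b ^ 2) / a ^ 2 := by
      rw [div_pow, mul_pow, Real.sq_sqrt (by norm_num), h2]
    rw [h1, h3]
    have h4 : 2 - 2 * (a⁻¹ * (b⁻¹ * t)) = (2 * (a * b) - 2 * t) / (a * b) := by
      field_simp
    rw [h4, div_le_div_iff₀ (by positivity) (by positivity)]
    rcases le_total a (2 * b) with hc | hc
    · nlinarith [mul_nonneg hb0.le (sq_nonneg (a - b)),
        mul_nonneg (mul_nonneg (sub_nonneg.mpr htab) (sub_nonneg.mpr hc)) ha0.le,
        mul_pos ha0 hb0]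
    · nlinarith [mul_nonneg (mul_nonneg ht0 (sub_nonneg.mpr hc)) ha0.le,
        mul_nonneg (mul_nonneg (mul_pos hb0 hb0).le hb0.le) ha0.le,
        mul_pos ha0 hb0]
  have hL : 0 ≤ Real.sqrt 2 * ‖x - y‖ / a := by positivity
  nlinarith [norm_nonneg (‖x‖⁻¹ • x - ‖y‖⁻¹ • y)]
end

section
/- Let A be an invertible real n×n matrix and let b, b̂ ∈ ℝ^n be unit vectors with ‖b − b̂‖₂ ≤ ε and ⟨A^{-1}b, A^{-1}b̂⟩ > 0. Then the normalized solutions of the two linear systems satisfy ‖ A^{-1}b/‖A^{-1}b‖₂ − A^{-1}b̂/‖A^{-1}b̂‖₂ ‖₂ ≤ √2 · κ(A) · ε, where κ(A) = ‖A‖·‖A^{-1}‖ is the condition number of A with respect to the ℓ2 operator norm. -/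
open scoped RealInnerProductSpace

lemma key_poly (a c p : ℝ) (ha : 0 < a) (hc : 0 < c) (hp : 0 < p) (hcs : p ≤ a*c) :
    2*a*c^2 - 2*c*p ≤ 2*(a^2 - 2*p + c^2)*a := by
  nlinarith [mul_nonneg ha.le (sq_nonneg (a - c)), mul_nonneg (sub_nonneg.mpr hcs) hc.le,
    mul_nonneg (sub_nonneg.mpr hcs) ha.le, mul_pos hp hc, mul_pos hp ha, sq_nonneg (a - c)]

/-- If `A` is invertible, `b, b̂` are unit vectors with `‖b - b̂‖ ≤ ε` and
`⟪A⁻¹b, A⁻¹b̂⟫ > 0`, then the normalized solutions of the two linear systems satisfy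
`‖A⁻¹b/‖A⁻¹b‖ - A⁻¹b̂/‖A⁻¹b̂‖‖ ≤ √2 κ(A) ε`, with `κ(A) = ‖A‖‖A⁻¹‖` the ℓ2 condition
number. -/
theorem normalized_solution_perturbation_bound
    (n : ℕ) (A : Matrix (Fin n) (Fin n) ℝ) (hA : IsUnit A)
    (b bhat : EuclideanSpace ℝ (Fin n)) (hb : ‖b‖ = 1) (hbhat : ‖bhat‖ = 1)
    (ε : ℝ) (hε : ‖b - bhat‖ ≤ ε)
    (hpos : 0 < ⟪Matrix.toEuclideanCLM (𝕜 := ℝ) A⁻¹ b,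
                 Matrix.toEuclideanCLM (𝕜 := ℝ) A⁻¹ bhat⟫) :
    ‖‖Matrix.toEuclideanCLM (𝕜 := ℝ) A⁻¹ b‖⁻¹ • Matrix.toEuclideanCLM (𝕜 := ℝ) A⁻¹ b -
        ‖Matrix.toEuclideanCLM (𝕜 := ℝ) A⁻¹ bhat‖⁻¹ • Matrix.toEuclideanCLM (𝕜 := ℝ) A⁻¹ bhat‖ ≤
      Real.sqrt 2 * (‖Matrix.toEuclideanCLM (𝕜 := ℝ) A‖ *
        ‖Matrix.toEuclideanCLM (𝕜 := ℝ) A⁻¹‖) * ε := by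
  set S := Matrix.toEuclideanCLM (𝕜 := ℝ) A with hS
  set T := Matrix.toEuclideanCLM (𝕜 := ℝ) A⁻¹ with hT
  have hST : ∀ v : EuclideanSpace ℝ (Fin n), S (T v) = v := by
    intro v
    have h1 : A * A⁻¹ = 1 := Matrix.mul_nonsing_inv A ((Matrix.isUnit_iff_isUnit_det A).mp hA)
    have h2 : S * T = 1 := by rw [hS, hT, ← map_mul, h1, map_one]
    calc S (T v) = (S * T) v := rfl
    _ = v := by rw [h2]; rfl
  set x := T b with hxdef
  set y := T bhat with hydef
  have hε0 : 0 ≤ ε := le_trans (norm_nonneg _) hε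
  have hx0 : x ≠ 0 := by
    intro h
    have : b = 0 := by rw [← hST b, ← hxdef, h, map_zero]
    simp [this] at hb
  have hy0 : y ≠ 0 := by
    intro h
    have : bhat = 0 := by rw [← hST bhat, ← hydef, h, map_zero]
    simp [this] at hbhat
  have ha : 0 < ‖x‖ := norm_pos_iff.mpr hx0
  have hc : 0 < ‖y‖ := norm_pos_iff.mpr hy0
  have hyinv : ‖y‖⁻¹ ≤ ‖S‖ := by
    have h1 : (1:ℝ) ≤ ‖S‖ * ‖y‖ := by
      calc (1:ℝ) = ‖bhat‖ := hbhat.symm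
      _ = ‖S y‖ := by rw [hST bhat]
      _ ≤ ‖S‖ * ‖y‖ := S.le_opNorm y
    rw [inv_le_iff_one_le_mul₀' hc]
    linarith
  have hxy : ‖x - y‖ ≤ ‖T‖ * ε := by
    calc ‖x - y‖ = ‖T (b - bhat)‖ := by rw [map_sub]
    _ ≤ ‖T‖ * ‖b - bhat‖ := T.le_opNorm _
    _ ≤ ‖T‖ * ε := mul_le_mul_of_nonneg_left hε (norm_nonneg T)
  set a := ‖x‖
  set c := ‖y‖
  set d := ‖x - y‖ with hddef
  have hcs : ⟪x, y⟫ ≤ a * c := real_inner_le_norm x y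
  have hdd : d^2 = a^2 - 2*⟪x, y⟫ + c^2 := by
    rw [hddef, @norm_sub_sq_real]
  have expand : ‖a⁻¹ • x - c⁻¹ • y‖^2 = 2 - 2*(a⁻¹*c⁻¹*⟪x, y⟫) := by
    rw [@norm_sub_sq_real, norm_smul, norm_smul, real_inner_smul_left, real_inner_smul_right,
      Real.norm_eq_abs, Real.norm_eq_abs, abs_of_pos (inv_pos.mpr ha),
      abs_of_pos (inv_pos.mpr hc), inv_mul_cancel₀ ha.ne', inv_mul_cancel₀ hc.ne']
    ring
  have hpoly := key_poly a c ⟪x, y⟫ ha hc hpos hcs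
  have h2 : 2 - 2*(a⁻¹*c⁻¹*⟪x, y⟫) ≤ 2*d^2*(c⁻¹)^2 := by
    have e1 : 2 - 2*(a⁻¹*c⁻¹*⟪x, y⟫) = (2*a*c^2 - 2*c*⟪x, y⟫)/(a*c^2) := by
      field_simp
    have e2 : 2*d^2*(c⁻¹)^2 = (2*(a^2 - 2*⟪x, y⟫ + c^2)*a)/(a*c^2) := by
      rw [hdd]; field_simp
    rw [e1, e2]
    gcongr
  have step1 : ‖a⁻¹ • x - c⁻¹ • y‖ ≤ Real.sqrt 2 * (d * c⁻¹) := by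
    have hr : 0 ≤ Real.sqrt 2 * (d * c⁻¹) := by positivity
    have hsq : ‖a⁻¹ • x - c⁻¹ • y‖^2 ≤ (Real.sqrt 2 * (d * c⁻¹))^2 := by
      have : (Real.sqrt 2 * (d * c⁻¹))^2 = 2*d^2*(c⁻¹)^2 := by
        rw [mul_pow, Real.sq_sqrt (by norm_num : (0:ℝ) ≤ 2), mul_pow]; ring
      rw [this, expand]; exact h2
    have := Real.sqrt_le_sqrt hsq
    rwa [Real.sqrt_sq (norm_nonneg _), Real.sqrt_sq hr] at this
  calc ‖a⁻¹ • x - c⁻¹ • y‖ ≤ Real.sqrt 2 * (d * c⁻¹) := step1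
  _ ≤ Real.sqrt 2 * ((‖T‖ * ε) * ‖S‖) := by
      apply mul_le_mul_of_nonneg_left _ (Real.sqrt_nonneg 2)
      exact mul_le_mul hxy hyinv (inv_nonneg.mpr hc.le) (by positivity)
  _ = Real.sqrt 2 * (‖S‖ * ‖T‖) * ε := by ring
end

section
/- (Error bound of quantum policy iteration.) Let a finite MDP with discount factor γ ∈ (0,1) and strictly positive rewards r(s,a) > 0 be given, set Γ = 1/(1−γ), and let Q* be the optimal value function, Q*(s,a) = max over deterministic policies π of Q^π(s,a). Let (π_t)_{t∈ℕ} be deterministic policies and (q̂^{π_t})_{t∈ℕ} be unit vectors in ℝ^{S×A} with nonnegative entries such that for every t and every state s, π_{t+1}(s) maximizes a ↦ q̂^{π_t}(s,a) over A. Writing q^{π_t} = Q^{π_t}/‖Q^{π_t}‖₂ and |Q^π⟩ = Q^π/‖Q^π‖₂, one has limsup_{t→∞} ‖ |Q*⟩ − |Q^{π_t}⟩ ‖_ρ ≤ 2√2 · γ Γ² · limsup_{t→∞} ‖ q̂^{π_t} − q^{π_t} ‖_∞, where ‖v‖_ρ = ‖v‖₂/√(|S||A|). -/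
/-- The Euclidean (ℓ2) norm of a real vector over a finite index type. -/
noncomputable def l2norm {ι : Type*} [Fintype ι] (v : ι → ℝ) : ℝ :=
  Real.sqrt (∑ i, v i ^ 2)

lemma l2norm_nonneg {ι : Type*} [Fintype ι] (v : ι → ℝ) : 0 ≤ l2norm v :=
  Real.sqrt_nonneg _

lemma l2norm_sq {ι : Type*} [Fintype ι] (v : ι → ℝ) : (l2norm v) ^ 2 = ∑ i, v i ^ 2 :=
  Real.sq_sqrt (by positivity)

lemma l2norm_le {ι : Type*} [Fintype ι] {v : ι → ℝ} {r : ℝ} (hr : 0 ≤ r)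
    (h : ∑ i, v i ^ 2 ≤ r ^ 2) : l2norm v ≤ r := by
  calc l2norm v ≤ Real.sqrt (r ^ 2) := Real.sqrt_le_sqrt h
    _ = r := Real.sqrt_sq hr

lemma l2norm_pos {ι : Type*} [Fintype ι] [Nonempty ι] {v : ι → ℝ} (h : ∀ i, 0 < v i) :
    0 < l2norm v :=
  Real.sqrt_pos.2 (Finset.sum_pos (fun i _ => by have := h i; positivity) Finset.univ_nonempty)

lemma l2norm_mono {ι : Type*} [Fintype ι] {v w : ι → ℝ} (h0 : ∀ i, 0 ≤ v i)
    (h : ∀ i, v i ≤ w i) : l2norm v ≤ l2norm w :=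
  Real.sqrt_le_sqrt (Finset.sum_le_sum fun i _ => pow_le_pow_left₀ (h0 i) (h i) 2)

lemma le_l2norm {ι : Type*} [Fintype ι] {v : ι → ℝ} (h0 : ∀ i, 0 ≤ v i) (i : ι) :
    v i ≤ l2norm v := by
  rw [show v i = Real.sqrt (v i ^ 2) from (Real.sqrt_sq (h0 i)).symm]
  exact Real.sqrt_le_sqrt (Finset.single_le_sum (fun j _ => sq_nonneg (v j)) (Finset.mem_univ i))

lemma normalize_diff {ι : Type*} [Fintype ι] (a b : ι → ℝ) (hb0 : ∀ i, 0 ≤ b i)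
    (hba : ∀ i, b i ≤ a i) (hb : 0 < l2norm b) :
    l2norm ((l2norm a)⁻¹ • a - (l2norm b)⁻¹ • b) ≤ Real.sqrt 2 * l2norm (a - b) / l2norm a := by
  set α := l2norm a with hαdef
  set β := l2norm b with hβdef
  have hβα : β ≤ α := l2norm_mono hb0 hba
  have hα : 0 < α := lt_of_lt_of_le hb hβα
  have ha2 : ∑ i, a i ^ 2 = α ^ 2 := (l2norm_sq a).symm
  have hb2 : ∑ i, b i ^ 2 = β ^ 2 := (l2norm_sq b).symm
  set C := ∑ i, a i * b i with hCdef
  have hC0 : 0 ≤ C := Finset.sum_nonneg fun i _ => mul_nonneg ((hb0 i).trans (hba i)) (hb0 i)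
  have hCS : C ^ 2 ≤ α ^ 2 * β ^ 2 := by
    rw [← ha2, ← hb2]; exact Finset.univ.sum_mul_sq_le_sq_mul_sq a b
  have hCab : C ≤ α * β := by
    by_contra hcon
    push_neg at hcon
    have h1 : α * β * (α * β) < C * C :=
      mul_lt_mul' hcon.le hcon (mul_nonneg hα.le hb.le) (lt_of_le_of_lt (mul_nonneg hα.le hb.le) hcon)
    nlinarith
  have hdiff : ∑ i, (a i - b i) ^ 2 = α ^ 2 + β ^ 2 - 2 * C := by
    have : ∑ i, (a i - b i) ^ 2 = ∑ i, (a i ^ 2 + b i ^ 2 - 2 * (a i * b i)) := by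
      apply Finset.sum_congr rfl; intros; ring
    rw [this, Finset.sum_sub_distrib, Finset.sum_add_distrib, ha2, hb2, ← Finset.mul_sum, ← hCdef]
  have hexp : ∑ i, ((α⁻¹ • a - β⁻¹ • b) i) ^ 2 = α⁻¹ ^ 2 * α ^ 2 + β⁻¹ ^ 2 * β ^ 2
      - 2 * (α⁻¹ * β⁻¹) * C := by
    have : ∀ i, ((α⁻¹ • a - β⁻¹ • b) i) ^ 2
        = α⁻¹ ^ 2 * a i ^ 2 + β⁻¹ ^ 2 * b i ^ 2 - 2 * (α⁻¹ * β⁻¹) * (a i * b i) := by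
      intro i; simp [Pi.sub_apply, Pi.smul_apply, smul_eq_mul]; ring
    rw [Finset.sum_congr rfl (fun i _ => this i), Finset.sum_sub_distrib,
      Finset.sum_add_distrib, ← Finset.mul_sum, ← Finset.mul_sum, ← Finset.mul_sum, ha2, hb2,
      ← hCdef]
  have hkey : C * (2 * β - α) ≤ β ^ 3 := by
    rcases le_or_gt (2 * β) α with h | h
    · nlinarith [mul_nonneg hC0 (sub_nonneg.2 h), pow_pos hb 3]
    · have h2 : C * (2 * β - α) ≤ α * β * (2 * β - α) :=
        mul_le_mul_of_nonneg_right hCab (le_of_lt (sub_pos.2 h))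
      nlinarith [sq_nonneg (α - β), hb.le, mul_nonneg (mul_nonneg hb.le hb.le) hb.le]
  have hr : 0 ≤ Real.sqrt 2 * l2norm (a - b) / α :=
    div_nonneg (mul_nonneg (Real.sqrt_nonneg _) (l2norm_nonneg _)) hα.le
  apply l2norm_le hr
  rw [hexp]
  have hab2 : (l2norm (a - b)) ^ 2 = α ^ 2 + β ^ 2 - 2 * C := by
    rw [l2norm_sq, ← hdiff]
    exact Finset.sum_congr rfl (fun i _ => by simp [Pi.sub_apply])
  have hrsq : (Real.sqrt 2 * l2norm (a - b) / α) ^ 2 = 2 * (α ^ 2 + β ^ 2 - 2 * C) / α ^ 2 := by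
    rw [div_pow, mul_pow, Real.sq_sqrt (by norm_num : (0:ℝ) ≤ 2), hab2]
  rw [hrsq]
  have hβ : 0 < β := hb
  have e1 : α⁻¹ ^ 2 * α ^ 2 + β⁻¹ ^ 2 * β ^ 2 - 2 * (α⁻¹ * β⁻¹) * C
      = (2 * (α * β) - 2 * C) / (α * β) := by
    field_simp
    ring
  rw [e1, div_le_div_iff₀ (by positivity) (by positivity)]
  nlinarith [mul_le_mul_of_nonneg_left hkey (le_of_lt hα), sq_nonneg (α - β)]

lemma wsum_le {S : Type*} [Fintype S] {w v : S → ℝ} (hw : ∀ s, 0 ≤ w s)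
    (hw1 : ∑ s, w s = 1) {M : ℝ} (hv : ∀ s, v s ≤ M) : ∑ s, w s * v s ≤ M := by
  calc ∑ s, w s * v s ≤ ∑ s, w s * M :=
        Finset.sum_le_sum fun i _ => mul_le_mul_of_nonneg_left (hv i) (hw i)
    _ = M := by rw [← Finset.sum_mul, hw1, one_mul]

lemma wsum_ge {S : Type*} [Fintype S] {w v : S → ℝ} (hw : ∀ s, 0 ≤ w s)
    (hw1 : ∑ s, w s = 1) {M : ℝ} (hv : ∀ s, M ≤ v s) : M ≤ ∑ s, w s * v s := by
  have := wsum_le (v := fun s => -v s) hw hw1 (M := -M) (fun s => neg_le_neg (hv s))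
  simp only [mul_neg, Finset.sum_neg_distrib] at this
  linarith

/-- Core comparison lemma for MDPs, proved via a max argument. -/
lemma mdp_comparison {S A : Type*} [Fintype S] [Fintype A] [Nonempty S] [Nonempty A]
    (p : S → A → S → ℝ) (hp0 : ∀ s a s', 0 ≤ p s a s')
    (hp1 : ∀ s a, ∑ s', p s a s' = 1)
    {γ : ℝ} (hγ0 : 0 ≤ γ) (hγ1 : γ < 1)
    (F G : S × A → ℝ) (σ : S → A) (c : ℝ)
    (h : ∀ s a, F (s, a) - G (s, a)
      ≤ γ * ∑ s', p s a s' * (F (s', σ s') - G (s', σ s')) + c) :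
    ∀ x, F x - G x ≤ c / (1 - γ) := by
  obtain ⟨⟨s₀, a₀⟩, hx₀⟩ := Finite.exists_max (fun x : S × A => F x - G x)
  set M := F (s₀, a₀) - G (s₀, a₀) with hM
  have hsum : ∑ s', p s₀ a₀ s' * (F (s', σ s') - G (s', σ s')) ≤ M :=
    wsum_le (hp0 s₀ a₀) (hp1 s₀ a₀) (fun s' => hx₀ (s', σ s'))
  have hMle : M ≤ c / (1 - γ) := by
    have h1 : M ≤ γ * M + c := le_trans (h s₀ a₀)
      (by nlinarith [mul_le_mul_of_nonneg_left hsum hγ0])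
    rw [le_div_iff₀ (by linarith)]
    nlinarith
  exact fun x => le_trans (hx₀ x) hMle

/-- Error bound of quantum policy iteration with greedy updates on reconstructed
normalized value functions:
`limsup ‖|Q*⟩ - |Q^{π_t}⟩‖_ρ ≤ 2√2 γΓ² limsup ‖q̂^{π_t} - q^{π_t}‖_∞`,
where `Γ = 1/(1-γ)`, `|Q⟩ = Q/‖Q‖₂`, and `‖v‖_ρ = ‖v‖₂/√(|S||A|)`. -/
theorem quantum_policy_iteration_error_bound
    {S A : Type*} [Fintype S] [Fintype A] [Nonempty S] [Nonempty A]
    (p : S → A → S → ℝ) (hp0 : ∀ s a s', 0 ≤ p s a s')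
    (hp1 : ∀ s a, ∑ s', p s a s' = 1)
    (r : S × A → ℝ) (hr0 : ∀ x, 0 < r x) (hr1 : ∀ x, r x ≤ 1)
    (γ : ℝ) (hγ0 : 0 < γ) (hγ1 : γ < 1)
    (Qf : (S → A) → S × A → ℝ)
    (hQf : ∀ (π : S → A) (s : S) (a : A),
      Qf π (s, a) = r (s, a) + γ * ∑ s', p s a s' * Qf π (s', π s'))
    (Qstar : S × A → ℝ) (hQstar : ∀ x, Qstar x = ⨆ π : S → A, Qf π x)
    (πs : ℕ → S → A) (qhat : ℕ → S × A → ℝ)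
    (hunit : ∀ t, l2norm (qhat t) = 1) (hnonneg : ∀ t x, 0 ≤ qhat t x)
    (hgreedy : ∀ (t : ℕ) (s : S) (a : A), qhat t (s, a) ≤ qhat t (s, πs (t + 1) s)) :
    Filter.limsup
        (fun t : ℕ =>
          l2norm ((l2norm Qstar)⁻¹ • Qstar - (l2norm (Qf (πs t)))⁻¹ • Qf (πs t)) /
            Real.sqrt (Fintype.card S * Fintype.card A))
        Filter.atTop ≤
      2 * Real.sqrt 2 * γ * (1 / (1 - γ)) ^ 2 *
        Filter.limsup
          (fun t : ℕ => ‖qhat t - (l2norm (Qf (πs t)))⁻¹ • Qf (πs t)‖) Filter.atTop := by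
  classical
  have h1γ : 0 < 1 - γ := by linarith
  set Γ : ℝ := 1 / (1 - γ) with hΓdef
  have hΓpos : 0 < Γ := by positivity
  have hΓγ : γ * Γ + 1 = Γ := by rw [hΓdef]; field_simp; ring
  have hsplit : ∀ (s : S) (a : A) (X Y : S → ℝ),
      ∑ s', p s a s' * (X s' - Y s') = ∑ s', p s a s' * X s' - ∑ s', p s a s' * Y s' := by
    intro s a X Y
    rw [← Finset.sum_sub_distrib]
    exact Finset.sum_congr rfl fun i _ => by ring
  -- bounds on Qf
  have hub : ∀ (π : S → A) (x : S × A), Qf π x ≤ Γ := by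
    intro π x
    have hcomp := mdp_comparison p hp0 hp1 hγ0.le hγ1 (Qf π) (fun _ => 0) π 1 ?_ x
    · simpa [hΓdef] using hcomp
    · intro s a
      show Qf π (s, a) - (0:ℝ)
          ≤ γ * ∑ s', p s a s' * (Qf π (s', π s') - (0:ℝ)) + 1
      rw [hQf π s a]
      have e : ∑ s', p s a s' * (Qf π (s', π s') - (0:ℝ))
          = ∑ s', p s a s' * Qf π (s', π s') := by
        exact Finset.sum_congr rfl fun i _ => by ring
      rw [e]
      have := hr1 (s, a)
      linarith
  have hlb0 : ∀ (π : S → A) (x : S × A), 0 ≤ Qf π x := by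
    intro π x
    have hcomp := mdp_comparison p hp0 hp1 hγ0.le hγ1 (fun _ => 0) (Qf π) π 0 ?_ x
    · have : (0:ℝ) - Qf π x ≤ 0 / (1 - γ) := hcomp
      simpa using this
    · intro s a
      show (0:ℝ) - Qf π (s, a)
          ≤ γ * ∑ s', p s a s' * ((0:ℝ) - Qf π (s', π s')) + 0
      rw [hQf π s a]
      have e : ∑ s', p s a s' * ((0:ℝ) - Qf π (s', π s'))
          = -∑ s', p s a s' * Qf π (s', π s') := by
        rw [← Finset.sum_neg_distrib]
        exact Finset.sum_congr rfl fun i _ => by ring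
      rw [e]
      have := (hr0 (s, a)).le
      nlinarith
  have hpos : ∀ (π : S → A) (x : S × A), 0 < Qf π x := by
    rintro π ⟨s, a⟩
    rw [hQf π s a]
    have h2 : 0 ≤ ∑ s', p s a s' * Qf π (s', π s') :=
      Finset.sum_nonneg fun s' _ => mul_nonneg (hp0 _ _ _) (hlb0 _ _)
    nlinarith [hr0 (s, a)]
  -- optimal policy
  obtain ⟨πstar, hπstar⟩ := Finite.exists_max (fun π : S → A => ∑ x, Qf π x)
  have hπ'ex : ∀ s : S, ∃ a' : A, ∀ a, Qf πstar (s, a) ≤ Qf πstar (s, a') := fun s =>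
    Finite.exists_max fun a => Qf πstar (s, a)
  choose π' hπ' using hπ'ex
  have hstarle : ∀ x, Qf πstar x ≤ Qf π' x := by
    intro x
    have hcomp := mdp_comparison p hp0 hp1 hγ0.le hγ1 (Qf πstar) (Qf π') π' 0 ?_ x
    · simpa using hcomp
    · intro s a
      rw [hQf πstar s a, hQf π' s a, hsplit]
      have h1 : ∑ s', p s a s' * Qf πstar (s', πstar s')
          ≤ ∑ s', p s a s' * Qf πstar (s', π' s') :=
        Finset.sum_le_sum fun s' _ => mul_le_mul_of_nonneg_left (hπ' s' _) (hp0 _ _ _)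
      nlinarith [mul_le_mul_of_nonneg_left h1 hγ0.le]
  have heq : ∀ x, Qf π' x = Qf πstar x := by
    intro x
    by_contra hne
    have hlt : Qf πstar x < Qf π' x := lt_of_le_of_ne (hstarle x) (Ne.symm hne)
    have hsumlt : ∑ y, Qf πstar y < ∑ y, Qf π' y :=
      Finset.sum_lt_sum (fun i _ => hstarle i) ⟨x, Finset.mem_univ x, hlt⟩
    exact absurd (hπstar π') (not_le.2 hsumlt)
  have hopt : ∀ (σ : S → A) (s : S) (a : A),
      r (s, a) + γ * ∑ s', p s a s' * Qf πstar (s', σ s') ≤ Qf πstar (s, a) := by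
    intro σ s a
    have e1 : Qf πstar (s, a) = r (s, a) + γ * ∑ s', p s a s' * Qf πstar (s', π' s') := by
      calc Qf πstar (s, a) = Qf π' (s, a) := (heq _).symm
        _ = r (s, a) + γ * ∑ s', p s a s' * Qf π' (s', π' s') := hQf π' s a
        _ = r (s, a) + γ * ∑ s', p s a s' * Qf πstar (s', π' s') := by
            rw [Finset.sum_congr rfl fun s' _ => by rw [heq]]
    rw [e1]
    have h1 : ∑ s', p s a s' * Qf πstar (s', σ s')
        ≤ ∑ s', p s a s' * Qf πstar (s', π' s') :=
      Finset.sum_le_sum fun s' _ => mul_le_mul_of_nonneg_left (hπ' s' _) (hp0 _ _ _)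
    nlinarith [mul_le_mul_of_nonneg_left h1 hγ0.le]
  have hdom : ∀ (π : S → A) (x : S × A), Qf π x ≤ Qf πstar x := by
    intro π x
    have hcomp := mdp_comparison p hp0 hp1 hγ0.le hγ1 (Qf π) (Qf πstar) π 0 ?_ x
    · simpa using hcomp
    · intro s a
      rw [hQf π s a, hsplit]
      have := hopt π s a
      nlinarith [this]
  have hQQ : Qstar = Qf πstar := by
    funext x
    rw [hQstar x]
    apply le_antisymm
    · exact ciSup_le fun π => hdom π x
    · exact le_ciSup (f := fun π : S → A => Qf π x) (Set.Finite.bddAbove (Set.finite_range _)) πstar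
  subst hQQ
  -- notation
  set K := l2norm (Qf πstar) with hKdef
  have hKpos : 0 < K := l2norm_pos (hpos πstar)
  set E : ℕ → ℝ := fun t => ‖Qf πstar - Qf (πs t)‖ with hEdef
  set ε : ℕ → ℝ := fun t => ‖qhat t - (l2norm (Qf (πs t)))⁻¹ • Qf (πs t)‖ with hεdef
  have hE0 : ∀ t, 0 ≤ E t := fun t => norm_nonneg _
  have hε0 : ∀ t, 0 ≤ ε t := fun t => norm_nonneg _
  have hEpt : ∀ (t : ℕ) (x : S × A), Qf πstar x - Qf (πs t) x ≤ E t := by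
    intro t x
    have h := norm_le_pi_norm (Qf πstar - Qf (πs t)) x
    rw [Real.norm_eq_abs] at h
    calc Qf πstar x - Qf (πs t) x = (Qf πstar - Qf (πs t)) x := rfl
      _ ≤ |(Qf πstar - Qf (πs t)) x| := le_abs_self _
      _ ≤ E t := h
  have hEΓ : ∀ t, E t ≤ Γ := by
    intro t
    apply (pi_norm_le_iff_of_nonneg hΓpos.le).2
    intro x
    rw [Real.norm_eq_abs, show (Qf πstar - Qf (πs t)) x = Qf πstar x - Qf (πs t) x from rfl,
      abs_of_nonneg (sub_nonneg.2 (hdom _ _))]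
    have := hub πstar x
    have := hlb0 (πs t) x
    linarith
  have hKt : ∀ t, 0 < l2norm (Qf (πs t)) := fun t => l2norm_pos (hpos _)
  have hKtK : ∀ t, l2norm (Qf (πs t)) ≤ K :=
    fun t => l2norm_mono (fun x => (hpos _ x).le) (fun x => hdom _ x)
  have hεbd : ∀ t, ε t ≤ 2 := by
    intro t
    have h1 : ‖qhat t‖ ≤ 1 := by
      apply (pi_norm_le_iff_of_nonneg one_pos.le).2
      intro x
      rw [Real.norm_eq_abs, abs_of_nonneg (hnonneg t x)]
      have := le_l2norm (hnonneg t) x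
      rwa [hunit t] at this
    have h2 : ‖(l2norm (Qf (πs t)))⁻¹ • Qf (πs t)‖ ≤ 1 := by
      apply (pi_norm_le_iff_of_nonneg one_pos.le).2
      intro x
      have hc := hKt t
      rw [Real.norm_eq_abs, show ((l2norm (Qf (πs t)))⁻¹ • Qf (πs t)) x
          = (l2norm (Qf (πs t)))⁻¹ * Qf (πs t) x from rfl,
        abs_of_nonneg (mul_nonneg (inv_nonneg.2 hc.le) (hlb0 _ _))]
      rw [inv_mul_le_iff₀ hc, mul_one]
      exact le_l2norm (fun y => hlb0 _ y) x
    calc ε t ≤ ‖qhat t‖ + ‖(l2norm (Qf (πs t)))⁻¹ • Qf (πs t)‖ := norm_sub_le _ _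
      _ ≤ 2 := by linarith
  -- greedy key estimate
  have hgkey : ∀ (t : ℕ) (s : S) (a b : A), qhat t (s, a) ≤ qhat t (s, b) →
      Qf (πs t) (s, a) - Qf (πs t) (s, b) ≤ 2 * l2norm (Qf (πs t)) * ε t := by
    intro t s a b hab
    set c := l2norm (Qf (πs t)) with hcdef
    have hc : 0 < c := hKt t
    have hvx : ∀ x : S × A, |qhat t x - c⁻¹ * Qf (πs t) x| ≤ ε t := by
      intro x
      have h := norm_le_pi_norm (qhat t - c⁻¹ • Qf (πs t)) x
      rw [Real.norm_eq_abs] at h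
      exact h
    have h1 := abs_le.1 (hvx (s, a))
    have h2 := abs_le.1 (hvx (s, b))
    have h3 : c⁻¹ * Qf (πs t) (s, a) ≤ c⁻¹ * Qf (πs t) (s, b) + 2 * ε t := by
      have := h1.2
      have := h2.1
      linarith
    have e : ∀ y : S × A, Qf (πs t) y = c * (c⁻¹ * Qf (πs t) y) := by
      intro y
      rw [← mul_assoc, mul_inv_cancel₀ hc.ne', one_mul]
    rw [e (s, a), e (s, b)]
    nlinarith [mul_le_mul_of_nonneg_left h3 hc.le]
  -- approximate policy improvement step
  have hstep : ∀ (t : ℕ) (x : S × A), Qf (πs t) x - Qf (πs (t + 1)) x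
      ≤ 2 * γ * l2norm (Qf (πs t)) * ε t * Γ := by
    intro t x
    have hcomp := mdp_comparison p hp0 hp1 hγ0.le hγ1 (Qf (πs t)) (Qf (πs (t + 1)))
      (πs (t + 1)) (γ * (2 * l2norm (Qf (πs t)) * ε t)) ?_ x
    · refine le_trans hcomp (le_of_eq ?_)
      rw [hΓdef]
      field_simp
    · intro s a
      rw [hQf (πs t) s a, hQf (πs (t + 1)) s a, hsplit]
      have hv : ∀ s', Qf (πs t) (s', πs t s') - Qf (πs t) (s', πs (t + 1) s')
          ≤ 2 * l2norm (Qf (πs t)) * ε t :=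
        fun s' => hgkey t s' _ _ (hgreedy t s' (πs t s'))
      have hw := wsum_le (hp0 s a) (hp1 s a) hv
      rw [hsplit] at hw
      nlinarith [mul_le_mul_of_nonneg_left hw hγ0.le]
  -- error recursion
  have hrec : ∀ t, E (t + 1) ≤ γ * E t + 2 * γ * Γ * K * ε t := by
    intro t
    have hRHS0 : 0 ≤ γ * E t + 2 * γ * Γ * K * ε t := by
      have h1 : 0 ≤ γ * E t := mul_nonneg hγ0.le (hE0 t)
      have h2 : 0 ≤ 2 * γ * Γ * K * ε t :=
        mul_nonneg (mul_nonneg (mul_nonneg (mul_nonneg (by norm_num) hγ0.le) hΓpos.le)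
          hKpos.le) (hε0 t)
      linarith
    apply (pi_norm_le_iff_of_nonneg hRHS0).2
    rintro ⟨s, a⟩
    rw [Real.norm_eq_abs, show (Qf πstar - Qf (πs (t + 1))) (s, a)
        = Qf πstar (s, a) - Qf (πs (t + 1)) (s, a) from rfl,
      abs_of_nonneg (sub_nonneg.2 (hdom _ _))]
    rw [hQf πstar s a, hQf (πs (t + 1)) s a]
    have hin : ∀ s', Qf πstar (s', πstar s') - Qf (πs (t + 1)) (s', πs (t + 1) s')
        ≤ E t + 2 * l2norm (Qf (πs t)) * ε t + 2 * γ * l2norm (Qf (πs t)) * ε t * Γ := by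
      intro s'
      have i1 := hEpt t (s', πstar s')
      have i2 := hgkey t s' (πstar s') (πs (t + 1) s') (hgreedy t s' (πstar s'))
      have i3 := hstep t (s', πs (t + 1) s')
      linarith
    have hsum' := wsum_le (hp0 s a) (hp1 s a) hin
    have hsum : ∑ s', p s a s' * Qf πstar (s', πstar s')
        - ∑ s', p s a s' * Qf (πs (t + 1)) (s', πs (t + 1) s')
        ≤ E t + 2 * l2norm (Qf (πs t)) * ε t + 2 * γ * l2norm (Qf (πs t)) * ε t * Γ := by
      rw [← hsplit]
      exact hsum'
    have h5 := mul_le_mul_of_nonneg_left hsum hγ0.le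
    have e6 : γ * (E t + 2 * l2norm (Qf (πs t)) * ε t + 2 * γ * l2norm (Qf (πs t)) * ε t * Γ)
        = γ * E t + 2 * γ * l2norm (Qf (πs t)) * ε t * Γ := by
      linear_combination (2 * γ * l2norm (Qf (πs t)) * ε t) * hΓγ
    have e7 : 2 * γ * l2norm (Qf (πs t)) * ε t * Γ ≤ 2 * γ * Γ * K * ε t := by
      nlinarith [sub_nonneg.2 (hKtK t), mul_nonneg (mul_nonneg hγ0.le (hε0 t)) hΓpos.le]
    nlinarith [h5, e6, e7]
  -- pointwise bound on the normalized error
  have hcardS : 0 < (Fintype.card S : ℝ) := by exact_mod_cast Fintype.card_pos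
  have hcardA : 0 < (Fintype.card A : ℝ) := by exact_mod_cast Fintype.card_pos
  have hSA : (0:ℝ) < Real.sqrt ((Fintype.card S : ℝ) * (Fintype.card A : ℝ)) :=
    Real.sqrt_pos.2 (mul_pos hcardS hcardA)
  have hLHSpt : ∀ t : ℕ,
      l2norm (K⁻¹ • Qf πstar - (l2norm (Qf (πs t)))⁻¹ • Qf (πs t)) /
        Real.sqrt ((Fintype.card S : ℝ) * (Fintype.card A : ℝ))
      ≤ Real.sqrt 2 / K * E t := by
    intro t
    have hnd := normalize_diff (Qf πstar) (Qf (πs t)) (fun x => hlb0 _ x)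
      (fun x => hdom _ x) (hKt t)
    have hl2E : l2norm (Qf πstar - Qf (πs t))
        ≤ Real.sqrt ((Fintype.card S : ℝ) * (Fintype.card A : ℝ)) * E t := by
      apply l2norm_le (mul_nonneg hSA.le (hE0 t))
      rw [mul_pow, Real.sq_sqrt (mul_pos hcardS hcardA).le]
      have hptsq : ∀ x : S × A, ((Qf πstar - Qf (πs t)) x) ^ 2 ≤ E t ^ 2 := by
        intro x
        have h := norm_le_pi_norm (Qf πstar - Qf (πs t)) x
        rw [Real.norm_eq_abs] at h
        have := abs_le.1 h
        exact sq_le_sq' (by linarith [this.1]) this.2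
      calc ∑ x : S × A, ((Qf πstar - Qf (πs t)) x) ^ 2
          ≤ ∑ _x : S × A, E t ^ 2 := Finset.sum_le_sum fun x _ => hptsq x
        _ = (Fintype.card S : ℝ) * (Fintype.card A : ℝ) * E t ^ 2 := by
            rw [Finset.sum_const, Finset.card_univ, nsmul_eq_mul, Fintype.card_prod]
            push_cast
            ring
    calc l2norm (K⁻¹ • Qf πstar - (l2norm (Qf (πs t)))⁻¹ • Qf (πs t)) /
          Real.sqrt ((Fintype.card S : ℝ) * (Fintype.card A : ℝ))
        ≤ (Real.sqrt 2 * l2norm (Qf πstar - Qf (πs t)) / K) /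
          Real.sqrt ((Fintype.card S : ℝ) * (Fintype.card A : ℝ)) :=
          div_le_div_of_nonneg_right hnd hSA.le
      _ ≤ (Real.sqrt 2 * (Real.sqrt ((Fintype.card S : ℝ) * (Fintype.card A : ℝ)) * E t) / K) /
          Real.sqrt ((Fintype.card S : ℝ) * (Fintype.card A : ℝ)) := by
          apply div_le_div_of_nonneg_right ?_ hSA.le
          apply div_le_div_of_nonneg_right ?_ hKpos.le
          exact mul_le_mul_of_nonneg_left hl2E (Real.sqrt_nonneg 2)
      _ = Real.sqrt 2 / K * E t := by
          field_simp
  -- limsup machinery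
  set L := Filter.limsup ε Filter.atTop with hLdef
  have hεbdd : Filter.IsBoundedUnder (· ≤ ·) Filter.atTop ε :=
    Filter.isBoundedUnder_of ⟨2, hεbd⟩
  have hL0 : 0 ≤ L :=
    Filter.le_limsup_of_frequently_le (Filter.Frequently.of_forall hε0) hεbdd
  apply le_of_forall_pos_le_add
  intro δ hδ
  set c1 : ℝ := Real.sqrt 2 / K * (2 * γ * Γ * K) * Γ with hc1def
  have hs2 : (0:ℝ) < Real.sqrt 2 := Real.sqrt_pos.2 (by norm_num)
  have hc1 : c1 = 2 * Real.sqrt 2 * γ * Γ ^ 2 := by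
    rw [hc1def]
    field_simp
  have hc1pos : 0 < c1 := by
    rw [hc1]
    positivity
  set δ₁ : ℝ := δ / (2 * c1) with hδ₁def
  have hδ₁pos : 0 < δ₁ := by positivity
  have hev : ∀ᶠ t in Filter.atTop, ε t < L + δ₁ :=
    Filter.eventually_lt_of_limsup_lt (by linarith) hεbdd
  obtain ⟨N, hN⟩ := Filter.eventually_atTop.1 hev
  have hDnn : 0 ≤ 2 * γ * Γ * K :=
    mul_nonneg (mul_nonneg (mul_nonneg (by norm_num) hγ0.le) hΓpos.le) hKpos.le
  have hLδnn : 0 ≤ L + δ₁ := by linarith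
  have hind : ∀ k : ℕ, E (N + k) ≤ γ ^ k * Γ + 2 * γ * Γ * K * (L + δ₁) * Γ := by
    intro k
    induction k with
    | zero =>
      have hnn : 0 ≤ 2 * γ * Γ * K * (L + δ₁) * Γ :=
        mul_nonneg (mul_nonneg hDnn hLδnn) hΓpos.le
      have := hEΓ N
      simpa using by linarith
    | succ k ih =>
      have h2 : ε (N + k) ≤ L + δ₁ := (hN (N + k) (Nat.le_add_right N k)).le
      have hrk := hrec (N + k)
      have h3 := mul_le_mul_of_nonneg_left ih hγ0.le
      have h4 := mul_le_mul_of_nonneg_left h2 hDnn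
      calc E (N + (k + 1)) = E ((N + k) + 1) := by rw [Nat.add_succ]
        _ ≤ γ * E (N + k) + 2 * γ * Γ * K * ε (N + k) := hrk
        _ ≤ γ * (γ ^ k * Γ + 2 * γ * Γ * K * (L + δ₁) * Γ) + 2 * γ * Γ * K * (L + δ₁) := by
            linarith
        _ = γ ^ (k + 1) * Γ + 2 * γ * Γ * K * (L + δ₁) * (γ * Γ + 1) := by ring
        _ = γ ^ (k + 1) * Γ + 2 * γ * Γ * K * (L + δ₁) * Γ := by rw [hΓγ]
  set c2 : ℝ := Real.sqrt 2 / K * Γ with hc2def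
  have hc2pos : 0 < c2 := by positivity
  have htend : Filter.Tendsto (fun k : ℕ => γ ^ k) Filter.atTop (nhds 0) :=
    tendsto_pow_atTop_nhds_zero_of_lt_one hγ0.le hγ1
  have hev2 : ∀ᶠ k in Filter.atTop, γ ^ k < δ / (2 * c2) :=
    htend.eventually_lt_const (by positivity)
  obtain ⟨M, hM⟩ := Filter.eventually_atTop.1 hev2
  have hfinal : ∀ᶠ t in Filter.atTop,
      l2norm (K⁻¹ • Qf πstar - (l2norm (Qf (πs t)))⁻¹ • Qf (πs t)) /
        Real.sqrt ((Fintype.card S : ℝ) * (Fintype.card A : ℝ))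
      ≤ 2 * Real.sqrt 2 * γ * Γ ^ 2 * L + δ := by
    refine Filter.eventually_atTop.2 ⟨N + M, fun t ht => ?_⟩
    have h1 := hLHSpt t
    have h2 : E t ≤ γ ^ (t - N) * Γ + 2 * γ * Γ * K * (L + δ₁) * Γ := by
      have := hind (t - N)
      rwa [Nat.add_sub_cancel' (le_trans (Nat.le_add_right N M) ht)] at this
    have h3 : γ ^ (t - N) < δ / (2 * c2) := hM (t - N) (by omega)
    have h4 : Real.sqrt 2 / K * E t
        ≤ c2 * γ ^ (t - N) + c1 * (L + δ₁) := by
      have h5 := mul_le_mul_of_nonneg_left h2 (by positivity : 0 ≤ Real.sqrt 2 / K)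
      calc Real.sqrt 2 / K * E t
          ≤ Real.sqrt 2 / K * (γ ^ (t - N) * Γ + 2 * γ * Γ * K * (L + δ₁) * Γ) := h5
        _ = c2 * γ ^ (t - N) + c1 * (L + δ₁) := by rw [hc2def, hc1def]; ring
    have h6 : c2 * γ ^ (t - N) < c2 * (δ / (2 * c2)) := by
      exact mul_lt_mul_of_pos_left h3 hc2pos
    have h7 : c2 * (δ / (2 * c2)) = δ / 2 := by field_simp
    have h8 : c1 * δ₁ = δ / 2 := by rw [hδ₁def]; field_simp
    have h9 : c1 * (L + δ₁) = c1 * L + δ / 2 := by rw [mul_add, h8]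
    have h10 : c1 * L = 2 * Real.sqrt 2 * γ * Γ ^ 2 * L := by rw [hc1]
    calc l2norm (K⁻¹ • Qf πstar - (l2norm (Qf (πs t)))⁻¹ • Qf (πs t)) /
          Real.sqrt ((Fintype.card S : ℝ) * (Fintype.card A : ℝ))
        ≤ Real.sqrt 2 / K * E t := h1
      _ ≤ c2 * γ ^ (t - N) + c1 * (L + δ₁) := h4
      _ ≤ δ / 2 + (c1 * L + δ / 2) := by linarith [h6, h7, h9]
      _ = 2 * Real.sqrt 2 * γ * Γ ^ 2 * L + δ := by rw [h10]; ring
  have hcob : Filter.IsCoboundedUnder (· ≤ ·) Filter.atTop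
      (fun t : ℕ => l2norm (K⁻¹ • Qf πstar - (l2norm (Qf (πs t)))⁻¹ • Qf (πs t)) /
        Real.sqrt ((Fintype.card S : ℝ) * (Fintype.card A : ℝ))) :=
    Filter.isCoboundedUnder_le_of_le Filter.atTop
      (fun t => div_nonneg (l2norm_nonneg _) hSA.le)
  exact Filter.limsup_le_of_le hcob hfinal
end

section
/- For a finite MDP with discount factor γ ∈ (0,1), there exists a deterministic policy π* such that Q^{π*}(s,a) ≥ Q^π(s,a) for every deterministic policy π and every state-action pair (s,a), and moreover π*(s) maximizes a ↦ Q^{π*}(s,a) over A for every state s. -/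
/-- If `u ≤ γ * (stochastic average of u)` pointwise with `0 < γ < 1`, then `u ≤ 0`. -/
private lemma contract_le_zero {S : Type*} [Fintype S] [Nonempty S]
    {γ : ℝ} (hγ0 : 0 < γ) (hγ1 : γ < 1)
    (q : S → S → ℝ) (hq0 : ∀ s s', 0 ≤ q s s') (hq1 : ∀ s, ∑ s', q s s' = 1)
    (u : S → ℝ) (h : ∀ s, u s ≤ γ * ∑ s', q s s' * u s') :
    ∀ s, u s ≤ 0 := by
  obtain ⟨s0, hs0⟩ := Finite.exists_max u
  have hM : u s0 ≤ γ * u s0 := by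
    calc u s0 ≤ γ * ∑ s', q s0 s' * u s' := h s0
    _ ≤ γ * ∑ s', q s0 s' * u s0 := by
        refine mul_le_mul_of_nonneg_left ?_ hγ0.le
        exact Finset.sum_le_sum fun s' _ =>
          mul_le_mul_of_nonneg_left (hs0 s') (hq0 s0 s')
    _ = γ * u s0 := by rw [← Finset.sum_mul, hq1 s0, one_mul]
  have h0 : u s0 ≤ 0 := by nlinarith
  exact fun s => (hs0 s).trans h0

/-- Policy improvement: if `π'` is at least as good as `π` under `Qf π` at every state,
then `Qf π ≤ Qf π'` everywhere. -/
private lemma policy_improvement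
    {S A : Type*} [Fintype S] [Fintype A] [Nonempty S] [Nonempty A]
    (p : S → A → S → ℝ) (hp0 : ∀ s a s', 0 ≤ p s a s')
    (hp1 : ∀ s a, ∑ s', p s a s' = 1)
    (γ : ℝ) (hγ0 : 0 < γ) (hγ1 : γ < 1)
    (Qf : (S → A) → S × A → ℝ) (r : S × A → ℝ)
    (hQf : ∀ (π : S → A) (s : S) (a : A),
      Qf π (s, a) = r (s, a) + γ * ∑ s', p s a s' * Qf π (s', π s'))
    (π π' : S → A)
    (h : ∀ s, Qf π (s, π s) ≤ Qf π (s, π' s)) :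
    ∀ s a, Qf π (s, a) ≤ Qf π' (s, a) := by
  set u : S → ℝ := fun s => Qf π (s, π' s) - Qf π' (s, π' s) with hu
  have key : ∀ s a, Qf π (s, a) - Qf π' (s, a) ≤ γ * ∑ s', p s a s' * u s' := by
    intro s a
    have hdiff : Qf π (s, a) - Qf π' (s, a)
        = γ * ∑ s', p s a s' * (Qf π (s', π s') - Qf π' (s', π' s')) := by
      rw [hQf π s a, hQf π' s a]
      have hsum : ∑ s', p s a s' * (Qf π (s', π s') - Qf π' (s', π' s'))
          = ∑ s', p s a s' * Qf π (s', π s')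
            - ∑ s', p s a s' * Qf π' (s', π' s') := by
        rw [← Finset.sum_sub_distrib]
        exact Finset.sum_congr rfl fun _ _ => by ring
      rw [hsum]; ring
    rw [hdiff]
    refine mul_le_mul_of_nonneg_left ?_ hγ0.le
    refine Finset.sum_le_sum fun s' _ => ?_
    refine mul_le_mul_of_nonneg_left ?_ (hp0 s a s')
    exact sub_le_sub_right (h s') _
  have hu0 : ∀ s, u s ≤ 0 := by
    refine contract_le_zero hγ0 hγ1 (fun s => p s (π' s))
      (fun s s' => hp0 s (π' s) s') (fun s => hp1 s (π' s)) u fun s => ?_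
    exact key s (π' s)
  intro s a
  have h1 := key s a
  have h2 : ∑ s', p s a s' * u s' ≤ 0 :=
    Finset.sum_nonpos fun s' _ => mul_nonpos_of_nonneg_of_nonpos (hp0 s a s') (hu0 s')
  nlinarith

/-- For a finite MDP with discount factor `γ ∈ (0,1)` there exists an optimal
deterministic policy `π*`: its value function dominates that of every deterministic
policy at every state-action pair, and `π*` is greedy with respect to its own
value function. -/
theorem exists_optimal_deterministic_policy
    {S A : Type*} [Fintype S] [Fintype A] [Nonempty S] [Nonempty A]
    (p : S → A → S → ℝ) (hp0 : ∀ s a s', 0 ≤ p s a s')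
    (hp1 : ∀ s a, ∑ s', p s a s' = 1)
    (r : S × A → ℝ)
    (γ : ℝ) (hγ0 : 0 < γ) (hγ1 : γ < 1)
    (Qf : (S → A) → S × A → ℝ)
    (hQf : ∀ (π : S → A) (s : S) (a : A),
      Qf π (s, a) = r (s, a) + γ * ∑ s', p s a s' * Qf π (s', π s')) :
    ∃ πstar : S → A,
      (∀ (π : S → A) (x : S × A), Qf π x ≤ Qf πstar x) ∧
      (∀ (s : S) (a : A), Qf πstar (s, a) ≤ Qf πstar (s, πstar s)) := by
  classical
  -- pick the policy maximizing the summed value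
  obtain ⟨πs, hπs⟩ := Finite.exists_max (fun π : S → A => ∑ s, Qf π (s, π s))
  -- greedy improvement policy
  choose πg hπg using fun s => Finite.exists_max (fun a => Qf πs (s, a))
  have himp : ∀ s a, Qf πs (s, a) ≤ Qf πg (s, a) :=
    policy_improvement p hp0 hp1 γ hγ0 hγ1 Qf r hQf πs πg fun s => hπg s (πs s)
  -- pointwise value comparison between πs and πg
  have hptw : ∀ s, Qf πs (s, πs s) ≤ Qf πg (s, πg s) :=
    fun s => (hπg s (πs s)).trans (himp s (πg s))
  -- sums are equal by maximality, hence pointwise equality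
  have heq : ∀ s, Qf πg (s, πg s) = Qf πs (s, πs s) := by
    intro s
    by_contra hne
    have hlt : Qf πs (s, πs s) < Qf πg (s, πg s) :=
      lt_of_le_of_ne (hptw s) fun e => hne e.symm
    have : ∑ t, Qf πs (t, πs t) < ∑ t, Qf πg (t, πg t) :=
      Finset.sum_lt_sum (fun t _ => hptw t) ⟨s, Finset.mem_univ s, hlt⟩
    exact absurd (hπs πg) (not_le.mpr this)
  -- greedy property of πs
  have hgreedy : ∀ s a, Qf πs (s, a) ≤ Qf πs (s, πs s) := by
    intro s a
    calc Qf πs (s, a) ≤ Qf πs (s, πg s) := hπg s a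
      _ ≤ Qf πg (s, πg s) := himp s (πg s)
      _ = Qf πs (s, πs s) := heq s
  refine ⟨πs, ?_, hgreedy⟩
  -- domination over every policy
  intro π x
  set u : S → ℝ := fun s => Qf π (s, π s) - Qf πs (s, πs s) with hu
  have key : ∀ s a, Qf π (s, a) - Qf πs (s, a) ≤ γ * ∑ s', p s a s' * u s' := by
    intro s a
    have hdiff : Qf π (s, a) - Qf πs (s, a)
        = γ * ∑ s', p s a s' * (Qf π (s', π s') - Qf πs (s', πs s')) := by
      rw [hQf π s a, hQf πs s a]
      have hsum : ∑ s', p s a s' * (Qf π (s', π s') - Qf πs (s', πs s'))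
          = ∑ s', p s a s' * Qf π (s', π s')
            - ∑ s', p s a s' * Qf πs (s', πs s') := by
        rw [← Finset.sum_sub_distrib]
        exact Finset.sum_congr rfl fun _ _ => by ring
      rw [hsum]; ring
    rw [hdiff]
  have hu0 : ∀ s, u s ≤ 0 := by
    refine contract_le_zero hγ0 hγ1 (fun s => p s (π s))
      (fun s s' => hp0 s (π s) s') (fun s => hp1 s (π s)) u fun s => ?_
    calc u s = Qf π (s, π s) - Qf πs (s, πs s) := rfl
      _ ≤ Qf π (s, π s) - Qf πs (s, π s) :=
        sub_le_sub_left (hgreedy s (π s)) _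
      _ ≤ γ * ∑ s', p s (π s) s' * u s' := key s (π s)
  obtain ⟨s, a⟩ := x
  have h1 := key s a
  have h2 : ∑ s', p s a s' * u s' ≤ 0 :=
    Finset.sum_nonpos fun s' _ => mul_nonpos_of_nonneg_of_nonpos (hp0 s a s') (hu0 s')
  nlinarith
end
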